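/- In a simply-laced triangle-free Coxeter system, let α be a link of rank r ≥ 1 with supp_{⟦2⟧}([α]) = {s,t} where m(s,t) = 3. Then the first two letters of α are st or ts. Symmetrically, if supp_{⟦2r⟧}([α]) = {s,t}, then the last two letters of α (positions 2r, 2r+1) are st or ts. -/

import Mathlib

open List

namespace BraidFormal

variable {B : Type*}

/-- A single braid move: replace a factor `s t s` with `t s t` where `m(s,t) = 3`. -/
def IsBraidMove (M : CoxeterMatrix B) (w w' : List B) : Prop :=
  ∃ (u v : List B) (s t : B), M s t = 3 ∧
    w = u ++ [s, t, s] ++ v ∧ w' = u ++ [t, s, t] ++ v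

/-- Braid equivalence: the reflexive-transitive closure of braid moves. -/
def BraidEquiv (M : CoxeterMatrix B) : List B → List B → Prop :=
  Relation.ReflTransGen (IsBraidMove M)

/-- The braid class of a word. -/
def BraidClass (M : CoxeterMatrix B) (α : List B) : Set (List B) :=
  {β | BraidEquiv M α β}

/-- `w` has a braid shadow at (0-based) positions `i, i+1, i+2`:
the letters there are `s, t, s` with `m(s,t) = 3`.
(This corresponds to the 1-based interval `⟦i+1, i+3⟧` of the paper.) -/
def HasShadowAt (M : CoxeterMatrix B) (w : List B) (i : ℕ) : Prop :=
  ∃ s t : B, M s t = 3 ∧ w[i]? = some s ∧ w[i+1]? = some t ∧ w[i+2]? = some s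

/-- The braid class of `α` has a braid shadow at position `i`. -/
def ClassHasShadowAt (M : CoxeterMatrix B) (α : List B) (i : ℕ) : Prop :=
  ∃ β ∈ BraidClass M α, HasShadowAt M β i

/-- The rank of a reduced expression: the number of braid shadows of its braid class. -/
noncomputable def rank (M : CoxeterMatrix B) (α : List B) : ℕ :=
  Set.ncard {i | ClassHasShadowAt M α i}

/-- A Coxeter matrix is simply laced if all entries are at most 3. -/
def SimplyLaced (M : CoxeterMatrix B) : Prop := ∀ s t : B, M s t ≤ 3

/-- A Coxeter matrix is triangle free if its Coxeter graph has no three-cycles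
(all of whose edges are labelled 3). -/
def TriangleFree (M : CoxeterMatrix B) : Prop :=
  ∀ s t u : B, s ≠ t → t ≠ u → s ≠ u → M s t = 3 → M t u = 3 → M s u ≠ 3

/-- The set of generators appearing in (0-based) position `k` of some word in the
braid class of `α`. -/
def classSupp (M : CoxeterMatrix B) (α : List B) (k : ℕ) : Set B :=
  {s | ∃ β ∈ BraidClass M α, β[k]? = some s}

/-- The set of generators appearing in (0-based) positions `i` through `j` of `w`. -/
def suppInterval (w : List B) (i j : ℕ) : Set B :=
  {s | ∃ k, i ≤ k ∧ k ≤ j ∧ w[k]? = some s}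

variable {W : Type*} [Group W] {M : CoxeterMatrix B}

/-- `α` is a link of rank `r`: a reduced expression of length `2r+1` whose braid class
has braid shadows exactly at the (0-based) positions `0, 2, 4, …, 2r-2`
(the 1-based intervals `⟦1,3⟧, ⟦3,5⟧, …, ⟦2r-1,2r+1⟧`). -/
def IsLink (cs : CoxeterSystem M W) (α : List B) (r : ℕ) : Prop :=
  cs.IsReduced α ∧ α.length = 2 * r + 1 ∧
    ∀ i : ℕ, ClassHasShadowAt M α i ↔ ∃ j < r, i = 2 * j

/-- A Fibonacci link: a link all of whose braid-class braid shadows are braid shadows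
of the link itself. -/
def IsFibLink (cs : CoxeterSystem M W) (φ : List B) (r : ℕ) : Prop :=
  IsLink cs φ r ∧ ∀ i : ℕ, ClassHasShadowAt M φ i → HasShadowAt M φ i


section Aux

variable {M : CoxeterMatrix B}

lemma getElem?_middle (u v : List B) (a : List B) (k : ℕ) (hk : k < a.length) :
    (u ++ a ++ v)[u.length + k]? = a[k]? := by
  rw [List.append_assoc, List.getElem?_append_right (Nat.le_add_right _ _),
      Nat.add_sub_cancel_left, List.getElem?_append_left hk]

lemma getElem?_outside {a b : List B} (hab : a.length = b.length) (u v : List B) (n : ℕ)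
    (h : n < u.length ∨ u.length + a.length ≤ n) :
    (u ++ a ++ v)[n]? = (u ++ b ++ v)[n]? := by
  rcases h with h | h
  · rw [List.append_assoc, List.append_assoc, List.getElem?_append_left h,
        List.getElem?_append_left h]
  · have h1 : u.length ≤ n := by omega
    rw [List.append_assoc, List.append_assoc, List.getElem?_append_right h1,
        List.getElem?_append_right h1,
        List.getElem?_append_right (by omega : a.length ≤ n - u.length),
        List.getElem?_append_right (by omega : b.length ≤ n - u.length), hab]

lemma drop_eq_triple {l : List B} {n : ℕ} {a b c : B}
    (h0 : l[n]? = some a) (h1 : l[n+1]? = some b) (h2 : l[n+2]? = some c) :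
    l.drop n = a :: b :: c :: l.drop (n+3) := by
  apply List.ext_getElem?
  intro m
  match m with
  | 0 => rw [List.getElem?_drop]; simpa using h0
  | 1 => rw [List.getElem?_drop]; simpa using h1
  | 2 => rw [List.getElem?_drop]; simpa using h2
  | (m+3) =>
    have hr : (a :: b :: c :: l.drop (n+3))[m+3]? = (l.drop (n+3))[m]? := by simp
    rw [hr, List.getElem?_drop, List.getElem?_drop]
    congr 1
    omega

lemma eq_decomp {l : List B} {n : ℕ} {a b c : B}
    (h0 : l[n]? = some a) (h1 : l[n+1]? = some b) (h2 : l[n+2]? = some c) :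
    l = l.take n ++ [a, b, c] ++ l.drop (n+3) := by
  conv_lhs => rw [← List.take_append_drop n l, drop_eq_triple h0 h1 h2]
  simp

lemma length_of_mem_class {α β : List B} (hβ : β ∈ BraidClass M α) :
    β.length = α.length := by
  have hβ' : Relation.ReflTransGen (IsBraidMove M) α β := hβ
  clear hβ
  induction hβ' with
  | refl => rfl
  | tail _ h ih =>
    obtain ⟨u, v, s, t, _, hw, hw'⟩ := h
    rw [hw']
    rw [hw] at ih
    simpa using ih

lemma shadow_of_move {α β : List B} (hβ : β ∈ BraidClass M α) {u v : List B} {s t : B}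
    (hst : M s t = 3) (hw : β = u ++ [s, t, s] ++ v) :
    ClassHasShadowAt M α u.length := by
  refine ⟨β, hβ, s, t, hst, ?_, ?_, ?_⟩
  · have := getElem?_middle u v [s, t, s] 0 (by norm_num)
    rw [hw]; simpa using this
  · have := getElem?_middle u v [s, t, s] 1 (by norm_num)
    rw [hw]; simpa using this
  · have := getElem?_middle u v [s, t, s] 2 (by norm_num)
    rw [hw]; simpa using this

lemma pair_inv {α : List B} {r : ℕ} (hlen : α.length = 2*r+1)
    (hsh : ∀ i, ClassHasShadowAt M α i → ∃ j < r, i = 2*j)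
    {β : List B} (hβ : β ∈ BraidClass M α) :
    ((β[0]? = α[0]? ∧ β[1]? = α[1]?) ∨ (β[0]? = α[1]? ∧ β[1]? = α[0]?)) ∧
    ((β[2*r-1]? = α[2*r-1]? ∧ β[2*r]? = α[2*r]?) ∨
     (β[2*r-1]? = α[2*r]? ∧ β[2*r]? = α[2*r-1]?)) := by
  have hβ' : Relation.ReflTransGen (IsBraidMove M) α β := hβ
  clear hβ
  induction hβ' with
  | refl => exact ⟨Or.inl ⟨rfl, rfl⟩, Or.inl ⟨rfl, rfl⟩⟩
  | @tail β γ hsteps hmove ih =>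
    obtain ⟨u, v, s, t, hst, hw, hw'⟩ := hmove
    obtain ⟨j, hj, hji⟩ := hsh u.length (shadow_of_move hsteps hst hw)
    have hblen : β.length = 2*r+1 := by rw [length_of_mem_class hsteps, hlen]
    have hlen' : u.length + 3 + v.length = 2*r+1 := by
      have h := hblen; rw [hw] at h; simp at h; omega
    constructor
    · rcases u with _ | ⟨x, _ | ⟨y, u'⟩⟩
      · rcases ih.1 with ⟨h0, h1⟩ | ⟨h0, h1⟩ <;>
        · rw [hw] at h0 h1
          rw [hw']
          simp only [List.nil_append, List.getElem?_cons_zero,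
            List.getElem?_cons_succ] at h0 h1 ⊢
          first
          | exact Or.inr ⟨h1, h0⟩
          | exact Or.inl ⟨h1, h0⟩
      · exfalso; simp at hji; omega
      · have e0 : γ[0]? = β[0]? := by rw [hw, hw']; simp
        have e1 : γ[1]? = β[1]? := by rw [hw, hw']; simp
        rw [e0, e1]
        exact ih.1
    · rcases v with _ | ⟨z, _ | ⟨z', v'⟩⟩
      · simp at hlen'
        have h1β : β[2*r-1]? = some t := by
          rw [hw, (by omega : 2*r-1 = u.length + 1),
              getElem?_middle u [] [s, t, s] 1 (by norm_num)]
          simp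
        have h2β : β[2*r]? = some s := by
          rw [hw, (by omega : 2*r = u.length + 2),
              getElem?_middle u [] [s, t, s] 2 (by norm_num)]
          simp
        have h1γ : γ[2*r-1]? = some s := by
          rw [hw', (by omega : 2*r-1 = u.length + 1),
              getElem?_middle u [] [t, s, t] 1 (by norm_num)]
          simp
        have h2γ : γ[2*r]? = some t := by
          rw [hw', (by omega : 2*r = u.length + 2),
              getElem?_middle u [] [t, s, t] 2 (by norm_num)]
          simp
        rcases ih.2 with ⟨h0, h1⟩ | ⟨h0, h1⟩
        · rw [h1β] at h0; rw [h2β] at h1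
          exact Or.inr ⟨h1γ.trans h1, h2γ.trans h0⟩
        · rw [h1β] at h0; rw [h2β] at h1
          exact Or.inl ⟨h1γ.trans h1, h2γ.trans h0⟩
      · exfalso; simp at hlen'; omega
      · have hb : u.length + 3 ≤ 2*r - 1 := by simp at hlen'; omega
        have e0 : β[2*r-1]? = γ[2*r-1]? := by
          rw [hw, hw']
          exact getElem?_outside (a := [s, t, s]) (b := [t, s, t]) rfl u _ _
            (Or.inr (by simp; omega))
        have e1 : β[2*r]? = γ[2*r]? := by
          rw [hw, hw']
          exact getElem?_outside (a := [s, t, s]) (b := [t, s, t]) rfl u _ _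
            (Or.inr (by simp; omega))
        rw [← e0, ← e1]
        exact ih.2

lemma finish_pair (x y a b s t : B) (hne : a ≠ b) (ha : a = s ∨ a = t) (hb : b = s ∨ b = t)
    (hxy : (x = a ∧ y = b) ∨ (x = b ∧ y = a)) :
    [x, y] = [s, t] ∨ [x, y] = [t, s] := by
  rcases ha with rfl | rfl <;> rcases hb with rfl | rfl <;>
    rcases hxy with ⟨rfl, rfl⟩ | ⟨rfl, rfl⟩ <;> simp_all

end Aux

/-- the two ends of a link are rigid.  (0-based positions: position 1 is
the 1-based position 2; positions `2r-1, 2r` are the 1-based positions `2r, 2r+1`.) -/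
theorem statement_4 {B W : Type*} [Group W] {M : CoxeterMatrix B}
    (cs : CoxeterSystem M W) (hsl : SimplyLaced M) (htf : TriangleFree M)
    (α : List B) (r : ℕ) (hlink : IsLink cs α r) (hr : 1 ≤ r)
    (s t : B) (hm : M s t = 3) :
    (classSupp M α 1 = {s, t} → α.take 2 = [s, t] ∨ α.take 2 = [t, s]) ∧
    (classSupp M α (2 * r - 1) = {s, t} →
      α.drop (2 * r - 1) = [s, t] ∨ α.drop (2 * r - 1) = [t, s]) := by
  obtain ⟨hred, hlen, hsh⟩ := hlink
  have hshfwd : ∀ i, ClassHasShadowAt M α i → ∃ j < r, i = 2*j := fun i h => (hsh i).mp h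
  have hst : s ≠ t := by
    intro h
    rw [h, M.diagonal] at hm
    norm_num at hm
  constructor
  · intro hsupp
    obtain ⟨β, hβ, a, b, hab, h0, h1, h2⟩ := (hsh 0).mpr ⟨0, hr, rfl⟩
    have hne : a ≠ b := by
      intro h
      rw [h, M.diagonal] at hab
      norm_num at hab
    have hbmem : b ∈ classSupp M α 1 := ⟨β, hβ, h1⟩
    have hdec : β = β.take 0 ++ [a, b, a] ++ β.drop 3 := eq_decomp h0 h1 h2
    have hmove : IsBraidMove M β (β.take 0 ++ [b, a, b] ++ β.drop 3) :=
      ⟨β.take 0, β.drop 3, a, b, hab, hdec, rfl⟩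
    have hγ : (β.take 0 ++ [b, a, b] ++ β.drop 3) ∈ BraidClass M α :=
      Relation.ReflTransGen.tail hβ hmove
    have hγ1 : (β.take 0 ++ [b, a, b] ++ β.drop 3)[1]? = some a := by simp
    have hamem : a ∈ classSupp M α 1 := ⟨_, hγ, hγ1⟩
    rw [hsupp] at hamem hbmem
    simp only [Set.mem_insert_iff, Set.mem_singleton_iff] at hamem hbmem
    have hpair := (pair_inv hlen hshfwd hβ).1
    have htlen : (α.take 2).length = 2 := by rw [List.length_take]; omega
    obtain ⟨x, y, hd⟩ := List.length_eq_two.mp htlen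
    have hax : α[0]? = some x := by
      have h' := List.getElem?_take_of_lt (l := α) (j := 2) (i := 0) (by norm_num)
      rw [hd] at h'
      simpa using h'.symm
    have hay : α[1]? = some y := by
      have h' := List.getElem?_take_of_lt (l := α) (j := 2) (i := 1) (by norm_num)
      rw [hd] at h'
      simpa using h'.symm
    have hxy : (x = a ∧ y = b) ∨ (x = b ∧ y = a) := by
      rcases hpair with ⟨p0, p1⟩ | ⟨p0, p1⟩
      · rw [h0, hax] at p0
        rw [h1, hay] at p1
        exact Or.inl ⟨(Option.some.inj p0).symm, (Option.some.inj p1).symm⟩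
      · rw [h0, hay] at p0
        rw [h1, hax] at p1
        exact Or.inr ⟨(Option.some.inj p1).symm, (Option.some.inj p0).symm⟩
    rw [hd]
    exact finish_pair x y a b s t hne hamem hbmem hxy
  · intro hsupp
    obtain ⟨β, hβ, a, b, hab, h0, h1, h2⟩ := (hsh (2*(r-1))).mpr ⟨r-1, by omega, rfl⟩
    have hne : a ≠ b := by
      intro h
      rw [h, M.diagonal] at hab
      norm_num at hab
    have hβlen : β.length = 2*r+1 := by rw [length_of_mem_class hβ, hlen]
    have h1' : β[2*r-1]? = some b := by
      rw [(by omega : 2*r-1 = 2*(r-1)+1)]; exact h1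
    have h2' : β[2*r]? = some a := by
      rw [(by omega : 2*r = 2*(r-1)+2)]; exact h2
    have hbmem : b ∈ classSupp M α (2*r-1) := ⟨β, hβ, h1'⟩
    have hdec : β = β.take (2*(r-1)) ++ [a, b, a] ++ β.drop (2*(r-1)+3) := eq_decomp h0 h1 h2
    have hmove : IsBraidMove M β (β.take (2*(r-1)) ++ [b, a, b] ++ β.drop (2*(r-1)+3)) :=
      ⟨_, _, a, b, hab, hdec, rfl⟩
    have hγ : (β.take (2*(r-1)) ++ [b, a, b] ++ β.drop (2*(r-1)+3)) ∈ BraidClass M α :=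
      Relation.ReflTransGen.tail hβ hmove
    have htk : (β.take (2*(r-1))).length = 2*(r-1) := by rw [List.length_take]; omega
    have hγ1 : (β.take (2*(r-1)) ++ [b, a, b] ++ β.drop (2*(r-1)+3))[2*r-1]? = some a := by
      have h' := getElem?_middle (β.take (2*(r-1))) (β.drop (2*(r-1)+3)) [b, a, b] 1 (by norm_num)
      rw [htk] at h'
      rw [(by omega : 2*r-1 = 2*(r-1) + 1), h']
      simp
    have hamem : a ∈ classSupp M α (2*r-1) := ⟨_, hγ, hγ1⟩
    rw [hsupp] at hamem hbmem
    simp only [Set.mem_insert_iff, Set.mem_singleton_iff] at hamem hbmem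
    have hpair := (pair_inv hlen hshfwd hβ).2
    have hdlen : (α.drop (2*r-1)).length = 2 := by rw [List.length_drop]; omega
    obtain ⟨x, y, hd⟩ := List.length_eq_two.mp hdlen
    have hax : α[2*r-1]? = some x := by
      have h' : (α.drop (2*r-1))[0]? = α[2*r-1+0]? := List.getElem?_drop
      rw [hd] at h'
      simpa using h'.symm
    have hay : α[2*r]? = some y := by
      have h' : (α.drop (2*r-1))[1]? = α[2*r-1+1]? := List.getElem?_drop
      rw [hd, (by omega : 2*r-1+1 = 2*r)] at h'
      simpa using h'.symm
    have hxy : (x = b ∧ y = a) ∨ (x = a ∧ y = b) := by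
      rcases hpair with ⟨p0, p1⟩ | ⟨p0, p1⟩
      · rw [h1', hax] at p0
        rw [h2', hay] at p1
        exact Or.inl ⟨(Option.some.inj p0).symm, (Option.some.inj p1).symm⟩
      · rw [h1', hay] at p0
        rw [h2', hax] at p1
        exact Or.inr ⟨(Option.some.inj p1).symm, (Option.some.inj p0).symm⟩
    rw [hd]
    exact finish_pair x y b a s t (Ne.symm hne) hbmem hamem hxy


end BraidFormal
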